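/- If X₁ and X₂ are intrinsic Lorentzian pre-length spaces, then their Lorentzian amalgamation X = X₁ ⊔_A X₂ is intrinsic: for all [x],[y], τ̃([x],[y]) = sup{ L_{τ̃}(γ) | γ a future-directed causal curve from [x] to [y] }. -/

import Mathlib

open Set Metric

variable {α : Type*}

/-- The generating relation identifying `a ∈ A₁` with `f a`. -/
def glueRel {X₁ X₂ : Type*} (A₁ : Set X₁) (f : X₁ → X₂) : X₁ ⊕ X₂ → X₁ ⊕ X₂ → Prop :=
  fun p q => ∃ a ∈ A₁, p = Sum.inl a ∧ q = Sum.inr (f a)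

/-- The equivalence relation generated by `a ∼ f a`. -/
def glueEqv {X₁ X₂ : Type*} (A₁ : Set X₁) (f : X₁ → X₂) : X₁ ⊕ X₂ → X₁ ⊕ X₂ → Prop :=
  Relation.EqvGen (glueRel A₁ f)

def glueSetoid {X₁ X₂ : Type*} (A₁ : Set X₁) (f : X₁ → X₂) : Setoid (X₁ ⊕ X₂) :=
  ⟨glueEqv A₁ f, Relation.EqvGen.is_equivalence _⟩

/-- The disjoint union of two relations. -/
def sumRel {X₁ X₂ : Type*} (r₁ : X₁ → X₁ → Prop) (r₂ : X₂ → X₂ → Prop) :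
    X₁ ⊕ X₂ → X₁ ⊕ X₂ → Prop
  | Sum.inl x, Sum.inl y => r₁ x y
  | Sum.inr x, Sum.inr y => r₂ x y
  | _, _ => False

/-- One step `p ∼ p' R q' ∼ q` of a chain. -/
def glueStep (R eqv : α → α → Prop) : α → α → Prop := fun p q =>
  ∃ p' q', eqv p p' ∧ R p' q' ∧ eqv q' q

/-- The quotient relation: there is a finite chain `x ∼ x₁ R y₁ ∼ x₂ R y₂ ∼ ⋯ ∼ xₙ R yₙ ∼ y`. -/
def quotRel (R eqv : α → α → Prop) : α → α → Prop :=
  Relation.TransGen (glueStep R eqv)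

/-- A gluing chain from `x` to `y`: a nonempty list of pairs `(xᵢ, yᵢ)` with
`x ∼ x₁`, `yᵢ ∼ xᵢ₊₁`, and `yₙ ∼ y`. -/
def IsGlueChain (eqv : α → α → Prop) (x y : α) (l : List (α × α)) : Prop :=
  l ≠ [] ∧ l.Chain' (fun p q => eqv p.2 q.1) ∧
    (∃ p, l.head? = some p ∧ eqv x p.1) ∧ (∃ p, l.getLast? = some p ∧ eqv p.2 y)

/-- A causal chain: a gluing chain in which each pair is causally related. -/
def IsCausalChain (le eqv : α → α → Prop) (x y : α) (l : List (α × α)) : Prop :=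
  IsGlueChain eqv x y l ∧ ∀ p ∈ l, le p.1 p.2

/-- The quotient time separation: supremum of `Σ τ(xᵢ,yᵢ)` over causal chains. -/
noncomputable def quotTau (τ : α → α → ENNReal) (le eqv : α → α → Prop) (x y : α) : ENNReal :=
  sSup {v | ∃ l, IsCausalChain le eqv x y l ∧ v = (l.map fun p => τ p.1 p.2).sum}

/-- The quotient semi-metric: infimum of `Σ d(xᵢ,yᵢ)` over gluing chains. -/
noncomputable def quotDist (D : α → α → ENNReal) (eqv : α → α → Prop) (x y : α) : ENNReal :=
  sInf {v | ∃ l, IsGlueChain eqv x y l ∧ v = (l.map fun p => D p.1 p.2).sum}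

/-- The disjoint union time separation (zero across the two factors). -/
noncomputable def sumTau {X₁ X₂ : Type*} (τ₁ : X₁ → X₁ → ENNReal) (τ₂ : X₂ → X₂ → ENNReal) :
    X₁ ⊕ X₂ → X₁ ⊕ X₂ → ENNReal
  | Sum.inl x, Sum.inl y => τ₁ x y
  | Sum.inr x, Sum.inr y => τ₂ x y
  | _, _ => 0

/-- The disjoint union (extended) distance (infinite across the two factors). -/
noncomputable def sumEDist {X₁ X₂ : Type*} [PseudoEMetricSpace X₁] [PseudoEMetricSpace X₂] :
    X₁ ⊕ X₂ → X₁ ⊕ X₂ → ENNReal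
  | Sum.inl x, Sum.inl y => edist x y
  | Sum.inr x, Sum.inr y => edist x y
  | _, _ => ⊤

/-- A future-directed causal curve w.r.t. an extended distance `D` (locally Lipschitz)
and a causal relation `R` (monotone). -/
def IsCausalCurveE (D : α → α → ENNReal) (R : α → α → Prop) (γ : ℝ → α) (a b : ℝ) : Prop :=
  a ≤ b ∧
  (∀ t ∈ Set.Icc a b, ∃ K : NNReal, ∃ ε > (0:ℝ), ∀ s ∈ Set.Icc a b, ∀ s' ∈ Set.Icc a b,
      |s - t| < ε → |s' - t| < ε → D (γ s) (γ s') ≤ (K : ENNReal) * ENNReal.ofReal |s - s'|) ∧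
  ∀ s ∈ Set.Icc a b, ∀ t ∈ Set.Icc a b, s < t → R (γ s) (γ t)

/-- The `τ`-length of a curve: infimum over partitions of `Σ τ(γ(tᵢ),γ(tᵢ₊₁))`. -/
noncomputable def tauLen (T : α → α → ENNReal) (γ : ℝ → α) (a b : ℝ) : ENNReal :=
  sInf {v | ∃ n : ℕ, ∃ t : Fin (n + 1) → ℝ, StrictMono t ∧ t 0 = a ∧ t (Fin.last n) = b ∧
    v = ∑ i : Fin n, T (γ (t i.castSucc)) (γ (t i.succ))}

/-- The `d`-length of a curve: supremum over partitions of `Σ d(γ(tᵢ),γ(tᵢ₊₁))`. -/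
noncomputable def dLen (D : α → α → ENNReal) (γ : ℝ → α) (a b : ℝ) : ENNReal :=
  sSup {v | ∃ n : ℕ, ∃ t : Fin (n + 1) → ℝ, StrictMono t ∧ t 0 = a ∧ t (Fin.last n) = b ∧
    v = ∑ i : Fin n, D (γ (t i.castSucc)) (γ (t i.succ))}

/-- The quotient relation, descended to the quotient space. -/
def qRel {X₁ X₂ : Type*} (A₁ : Set X₁) (f : X₁ → X₂) (R : X₁ ⊕ X₂ → X₁ ⊕ X₂ → Prop)
    (p q : Quotient (glueSetoid A₁ f)) : Prop :=
  ∃ x y, Quotient.mk (glueSetoid A₁ f) x = p ∧ Quotient.mk (glueSetoid A₁ f) y = q ∧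
    quotRel R (glueEqv A₁ f) x y

/-- The quotient semi-metric, descended to the quotient space. -/
noncomputable def qDist {X₁ X₂ : Type*} [PseudoEMetricSpace X₁] [PseudoEMetricSpace X₂]
    (A₁ : Set X₁) (f : X₁ → X₂) (p q : Quotient (glueSetoid A₁ f)) : ENNReal :=
  quotDist sumEDist (glueEqv A₁ f) p.out q.out

/-- The quotient time separation, descended to the quotient space. -/
noncomputable def qTau {X₁ X₂ : Type*} (A₁ : Set X₁) (f : X₁ → X₂)
    (τ₁ : X₁ → X₁ → ENNReal) (τ₂ : X₂ → X₂ → ENNReal)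
    (le₁ : X₁ → X₁ → Prop) (le₂ : X₂ → X₂ → Prop)
    (p q : Quotient (glueSetoid A₁ f)) : ENNReal :=
  quotTau (sumTau τ₁ τ₂) (sumRel le₁ le₂) (glueEqv A₁ f) p.out q.out


set_option linter.unusedSectionVars false

section GlueEqv

variable {X₁ X₂ : Type*} {A₁ : Set X₁} {f : X₁ → X₂}

lemma glueEqv_refl (p : X₁ ⊕ X₂) : glueEqv A₁ f p p := Relation.EqvGen.refl p

lemma glueEqv_symm {p q} (h : glueEqv A₁ f p q) : glueEqv A₁ f q p := Relation.EqvGen.symm _ _ h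

lemma glueEqv_trans {p q r} (h : glueEqv A₁ f p q) (h' : glueEqv A₁ f q r) :
    glueEqv A₁ f p r := Relation.EqvGen.trans _ _ _ h h'

lemma glueEqv_of_mem {a : X₁} (ha : a ∈ A₁) : glueEqv A₁ f (Sum.inl a) (Sum.inr (f a)) :=
  Relation.EqvGen.rel _ _ ⟨a, ha, rfl, rfl⟩

/-- Explicit description of the glue equivalence. -/
def glueE (A₁ : Set X₁) (f : X₁ → X₂) (p q : X₁ ⊕ X₂) : Prop :=
  p = q ∨ (∃ a ∈ A₁, p = Sum.inl a ∧ q = Sum.inr (f a)) ∨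
    (∃ a ∈ A₁, q = Sum.inl a ∧ p = Sum.inr (f a))

lemma glueE_symm {p q} (h : glueE A₁ f p q) : glueE A₁ f q p := by
  rcases h with h | h | h
  · exact Or.inl h.symm
  · exact Or.inr (Or.inr h)
  · exact Or.inr (Or.inl h)

lemma glueE_trans (hinj : Set.InjOn f A₁) {p q r} (h : glueE A₁ f p q) (h' : glueE A₁ f q r) :
    glueE A₁ f p r := by
  rcases h with rfl | ⟨a, ha, rfl, rfl⟩ | ⟨a, ha, rfl, rfl⟩
  · exact h'
  · rcases h' with rfl | ⟨b, hb, h1, h2⟩ | ⟨b, hb, rfl, h2⟩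
    · exact Or.inr (Or.inl ⟨a, ha, rfl, rfl⟩)
    · exact absurd h1 (by simp)
    · rcases Sum.inr.inj h2 with h3
      rcases hinj hb ha h3.symm with rfl
      exact Or.inl rfl
  · rcases h' with rfl | ⟨b, hb, h1, h2⟩ | ⟨b, hb, h1, h2⟩
    · exact Or.inr (Or.inr ⟨a, ha, rfl, rfl⟩)
    · rcases Sum.inl.inj h1 with rfl
      exact Or.inl h2.symm
    · exact absurd h2 (by simp)

lemma glueEqv_iff (hinj : Set.InjOn f A₁) {p q} :
    glueEqv A₁ f p q ↔ glueE A₁ f p q := by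
  constructor
  · intro h
    induction h with
    | rel p q h => exact Or.inr (Or.inl h)
    | refl p => exact Or.inl rfl
    | symm p q _ ih => exact glueE_symm ih
    | trans p q r _ _ ih ih' => exact glueE_trans hinj ih ih'
  · rintro (rfl | ⟨a, ha, rfl, rfl⟩ | ⟨a, ha, rfl, rfl⟩)
    · exact glueEqv_refl _
    · exact glueEqv_of_mem ha
    · exact glueEqv_symm (glueEqv_of_mem ha)

lemma glueEqv_inl_inl (hinj : Set.InjOn f A₁) {a b : X₁}
    (h : glueEqv A₁ f (Sum.inl a) (Sum.inl b)) : a = b := by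
  rcases (glueEqv_iff hinj).1 h with h | ⟨c, _, h1, h2⟩ | ⟨c, _, h1, h2⟩
  · exact Sum.inl.inj h
  · exact absurd h2 (by simp)
  · exact absurd h2 (by simp)

lemma glueEqv_inr_inr (hinj : Set.InjOn f A₁) {u v : X₂}
    (h : glueEqv A₁ f (Sum.inr u) (Sum.inr v)) : u = v := by
  rcases (glueEqv_iff hinj).1 h with h | ⟨c, _, h1, h2⟩ | ⟨c, _, h1, h2⟩
  · exact Sum.inr.inj h
  · exact absurd h1 (by simp)
  · exact absurd h1 (by simp)

lemma glueEqv_inl_inr (hinj : Set.InjOn f A₁) {a : X₁} {u : X₂}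
    (h : glueEqv A₁ f (Sum.inl a) (Sum.inr u)) : a ∈ A₁ ∧ u = f a := by
  rcases (glueEqv_iff hinj).1 h with h | ⟨c, hc, h1, h2⟩ | ⟨c, hc, h1, h2⟩
  · exact absurd h (by simp)
  · rcases Sum.inl.inj h1 with rfl
    exact ⟨hc, Sum.inr.inj h2⟩
  · exact absurd h1 (by simp)

lemma glueEqv_inr_inl (hinj : Set.InjOn f A₁) {a : X₁} {u : X₂}
    (h : glueEqv A₁ f (Sum.inr u) (Sum.inl a)) : a ∈ A₁ ∧ u = f a :=
  glueEqv_inl_inr hinj (glueEqv_symm h)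

end GlueEqv
section Chains

variable {le eqv : α → α → Prop} {τ D : α → α → ENNReal}

lemma isGlueChain_singleton {x y u v : α} (h1 : eqv x u) (h2 : eqv v y) :
    IsGlueChain eqv x y [(u, v)] :=
  ⟨by simp, List.isChain_singleton _, ⟨(u, v), rfl, h1⟩, ⟨(u, v), rfl, h2⟩⟩

lemma isCausalChain_singleton {x y u v : α} (h1 : eqv x u) (hle : le u v) (h2 : eqv v y) :
    IsCausalChain le eqv x y [(u, v)] :=
  ⟨isGlueChain_singleton h1 h2, by simpa⟩

lemma isGlueChain_pair {x y u v v' w : α} (h1 : eqv x u) (h2 : eqv v v') (h3 : eqv w y) :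
    IsGlueChain eqv x y [(u, v), (v', w)] :=
  ⟨by simp, List.isChain_pair.2 h2, ⟨(u, v), rfl, h1⟩, ⟨(v', w), rfl, h3⟩⟩

lemma IsGlueChain.append (htrans : ∀ p q r, eqv p q → eqv q r → eqv p r)
    {x m y : α} {l₁ l₂ : List (α × α)}
    (h₁ : IsGlueChain eqv x m l₁) (h₂ : IsGlueChain eqv m y l₂) :
    IsGlueChain eqv x y (l₁ ++ l₂) := by
  obtain ⟨hne₁, hc₁, ⟨p₁, hp₁, hx₁⟩, ⟨q₁, hq₁, hy₁⟩⟩ := h₁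
  obtain ⟨hne₂, hc₂, ⟨p₂, hp₂, hx₂⟩, ⟨q₂, hq₂, hy₂⟩⟩ := h₂
  refine ⟨by simp [hne₁], ?_, ?_, ?_⟩
  · refine List.IsChain.append hc₁ hc₂ ?_
    intro a ha b hb
    rw [hq₁] at ha; rw [hp₂] at hb
    cases Option.some.inj ha; cases Option.some.inj hb
    exact htrans _ _ _ hy₁ hx₂
  · exact ⟨p₁, by rw [List.head?_append, hp₁]; rfl, hx₁⟩
  · exact ⟨q₂, by rw [List.getLast?_append_of_ne_nil _ hne₂]; exact hq₂, hy₂⟩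

lemma IsCausalChain.append (htrans : ∀ p q r, eqv p q → eqv q r → eqv p r)
    {x m y : α} {l₁ l₂ : List (α × α)}
    (h₁ : IsCausalChain le eqv x m l₁) (h₂ : IsCausalChain le eqv m y l₂) :
    IsCausalChain le eqv x y (l₁ ++ l₂) := by
  refine ⟨h₁.1.append htrans h₂.1, ?_⟩
  intro p hp
  rcases List.mem_append.1 hp with h | h
  · exact h₁.2 p h
  · exact h₂.2 p h

lemma IsGlueChain.congr (htrans : ∀ p q r, eqv p q → eqv q r → eqv p r)
    {x x' y y' : α} {l : List (α × α)}
    (h : IsGlueChain eqv x y l) (hx : eqv x' x) (hy : eqv y y') :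
    IsGlueChain eqv x' y' l := by
  obtain ⟨hne, hc, ⟨p, hp, hxp⟩, ⟨q, hq, hyq⟩⟩ := h
  exact ⟨hne, hc, ⟨p, hp, htrans _ _ _ hx hxp⟩, ⟨q, hq, htrans _ _ _ hyq hy⟩⟩

lemma IsCausalChain.congr (htrans : ∀ p q r, eqv p q → eqv q r → eqv p r)
    {x x' y y' : α} {l : List (α × α)}
    (h : IsCausalChain le eqv x y l) (hx : eqv x' x) (hy : eqv y y') :
    IsCausalChain le eqv x' y' l := ⟨h.1.congr htrans hx hy, h.2⟩

lemma IsCausalChain.cons_decomp {x y : α} {p : α × α} {l : List (α × α)} (hne : l ≠ [])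
    (h : IsCausalChain le eqv x y (p :: l)) :
    eqv x p.1 ∧ le p.1 p.2 ∧ IsCausalChain le eqv p.2 y l := by
  obtain ⟨⟨_, hc, ⟨p', hp', hx'⟩, ⟨q, hq, hy⟩⟩, hle⟩ := h
  cases Option.some.inj hp'
  obtain ⟨b, l', rfl⟩ := List.exists_cons_of_ne_nil hne
  refine ⟨hx', hle _ (by simp), ⟨⟨hne, (List.isChain_cons_cons.1 hc).2, ⟨b, rfl, (List.isChain_cons_cons.1 hc).1⟩,
    ⟨q, ?_, hy⟩⟩, fun r hr => hle r (by simp [hr])⟩⟩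
  rw [List.getLast?_cons_cons] at hq
  exact hq

lemma le_quotTau_of_chain {x y : α} {l : List (α × α)} (h : IsCausalChain le eqv x y l) :
    (l.map fun p => τ p.1 p.2).sum ≤ quotTau τ le eqv x y :=
  le_sSup ⟨l, h, rfl⟩

lemma quotTau_le_iff {x y : α} {c : ENNReal} :
    quotTau τ le eqv x y ≤ c ↔
      ∀ l, IsCausalChain le eqv x y l → (l.map fun p => τ p.1 p.2).sum ≤ c := by
  rw [quotTau, sSup_le_iff]
  constructor
  · intro h l hl; exact h _ ⟨l, hl, rfl⟩
  · rintro h v ⟨l, hl, rfl⟩; exact h l hl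

lemma tau_le_quotTau {x y u v : α} (h1 : eqv x u) (hle : le u v) (h2 : eqv v y) :
    τ u v ≤ quotTau τ le eqv x y := by
  have := le_quotTau_of_chain (τ := τ) (isCausalChain_singleton h1 hle h2)
  simpa using this

lemma quotTau_congr_le (htrans : ∀ p q r, eqv p q → eqv q r → eqv p r)
    {x x' y y' : α} (hx : eqv x' x) (hy : eqv y y') :
    quotTau τ le eqv x y ≤ quotTau τ le eqv x' y' := by
  rw [quotTau_le_iff]
  intro l hl
  exact le_quotTau_of_chain (hl.congr htrans hx hy)

lemma quotTau_congr (hsymm : ∀ p q, eqv p q → eqv q p)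
    (htrans : ∀ p q r, eqv p q → eqv q r → eqv p r)
    {x x' y y' : α} (hx : eqv x x') (hy : eqv y y') :
    quotTau τ le eqv x y = quotTau τ le eqv x' y' :=
  le_antisymm (quotTau_congr_le htrans (hsymm _ _ hx) hy)
    (quotTau_congr_le htrans hx (hsymm _ _ hy))

lemma quotRel_chain (htrans : ∀ p q r, eqv p q → eqv q r → eqv p r)
    {x y : α} (h : quotRel le eqv x y) :
    ∃ l, IsCausalChain le eqv x y l := by
  induction h with
  | single h =>
      obtain ⟨p', q', h1, h2, h3⟩ := h
      exact ⟨[(p', q')], isCausalChain_singleton h1 h2 h3⟩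
  | tail _ h ih =>
      obtain ⟨l, hl⟩ := ih
      obtain ⟨p', q', h1, h2, h3⟩ := h
      exact ⟨l ++ [(p', q')], hl.append htrans (isCausalChain_singleton h1 h2 h3)⟩

lemma sSup_add_sSup_le {S₁ S₂ : Set ENNReal} {c : ENNReal}
    (h₁ : S₁.Nonempty) (h₂ : S₂.Nonempty) (h : ∀ a ∈ S₁, ∀ b ∈ S₂, a + b ≤ c) :
    sSup S₁ + sSup S₂ ≤ c := by
  rw [ENNReal.sSup_add h₁]
  refine iSup₂_le fun a ha => ?_
  rw [ENNReal.add_sSup h₂]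
  exact iSup₂_le fun b hb => h a ha b hb

lemma quotTau_add_quotTau_le (htrans : ∀ p q r, eqv p q → eqv q r → eqv p r) {x m y : α}
    (h₁ : ∃ l, IsCausalChain le eqv x m l) (h₂ : ∃ l, IsCausalChain le eqv m y l) :
    quotTau τ le eqv x m + quotTau τ le eqv m y ≤ quotTau τ le eqv x y := by
  obtain ⟨l₁, hl₁⟩ := h₁
  obtain ⟨l₂, hl₂⟩ := h₂
  refine sSup_add_sSup_le ⟨_, l₁, hl₁, rfl⟩ ⟨_, l₂, hl₂, rfl⟩ ?_
  rintro v ⟨la, hla, rfl⟩ w ⟨lb, hlb, rfl⟩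
  have := le_quotTau_of_chain (τ := τ) (hla.append htrans hlb)
  simpa using this

lemma exists_of_lt_sSup_add {S₁ S₂ : Set ENNReal} {r : ENNReal}
    (h₁ : S₁.Nonempty) (h₂ : S₂.Nonempty) (h : r < sSup S₁ + sSup S₂) :
    ∃ a ∈ S₁, ∃ b ∈ S₂, r < a + b := by
  rw [ENNReal.sSup_add h₁] at h
  rw [lt_iSup_iff] at h
  obtain ⟨a, h⟩ := h
  rw [lt_iSup_iff] at h
  obtain ⟨ha, h⟩ := h
  rw [ENNReal.add_sSup h₂, lt_iSup_iff] at h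
  obtain ⟨b, h⟩ := h
  rw [lt_iSup_iff] at h
  obtain ⟨hb, h⟩ := h
  exact ⟨a, ha, b, hb, h⟩

lemma quotDist_le_of_chain {x y : α} {l : List (α × α)} (h : IsGlueChain eqv x y l) :
    quotDist D eqv x y ≤ (l.map fun p => D p.1 p.2).sum :=
  sInf_le ⟨l, h, rfl⟩

lemma quotDist_le_single {x y u v : α} (h1 : eqv x u) (h2 : eqv v y) :
    quotDist D eqv x y ≤ D u v := by
  have := quotDist_le_of_chain (D := D) (isGlueChain_singleton h1 h2)
  simpa using this

lemma quotDist_le_pair {x y u v v' w : α} (h1 : eqv x u) (h2 : eqv v v') (h3 : eqv w y) :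
    quotDist D eqv x y ≤ D u v + D v' w := by
  have := quotDist_le_of_chain (D := D) (isGlueChain_pair h1 h2 h3)
  simpa using this

end Chains
section TauLen

variable {T : α → α → ENNReal} {γ : ℝ → α} {a b c m : ℝ}

lemma tauLen_le_sum {n : ℕ} {t : Fin (n + 1) → ℝ} (ht : StrictMono t) (h0 : t 0 = a)
    (hl : t (Fin.last n) = b) :
    tauLen T γ a b ≤ ∑ i : Fin n, T (γ (t i.castSucc)) (γ (t i.succ)) :=
  sInf_le ⟨n, t, ht, h0, hl, rfl⟩

lemma tauLen_self : tauLen T γ a a = 0 := by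
  refine le_antisymm ?_ zero_le
  have hsm : StrictMono (fun _ : Fin 1 => a) := by
    intro i j h
    have hi := i.isLt; have hj := j.isLt
    rw [Fin.lt_def] at h; omega
  have h := tauLen_le_sum (T := T) (γ := γ) (n := 0) (t := fun _ => a) hsm rfl rfl
  simpa using h

lemma tauLen_le_pair (hab : a ≤ b) : tauLen T γ a b ≤ T (γ a) (γ b) := by
  rcases eq_or_lt_of_le hab with rfl | hab
  · simp [tauLen_self]
  · have hmono : StrictMono (![a, b] : Fin 2 → ℝ) := by
      intro i j hij
      fin_cases i <;> fin_cases j <;> simp_all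
    have h := tauLen_le_sum (T := T) (γ := γ) (n := 1) (t := ![a, b]) hmono rfl rfl
    simpa using h

lemma tauLen_le_tauLen {β : Type*} {T' : β → β → ENNReal} {γ' : ℝ → β}
    (h : ∀ u w, u ∈ Icc a b → w ∈ Icc a b → u < w → T (γ u) (γ w) ≤ T' (γ' u) (γ' w)) :
    tauLen T γ a b ≤ tauLen T' γ' a b := by
  refine sInf_le_sInf_of_isCoinitialFor ?_
  rintro v ⟨n, t, ht, h0, hl, rfl⟩
  refine ⟨∑ i : Fin n, T (γ (t i.castSucc)) (γ (t i.succ)), ⟨n, t, ht, h0, hl, rfl⟩, ?_⟩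
  refine Finset.sum_le_sum fun i _ => ?_
  have hmem : ∀ j : Fin (n + 1), t j ∈ Icc a b := by
    intro j
    exact ⟨h0 ▸ ht.monotone (Fin.zero_le j), hl ▸ ht.monotone (Fin.le_last j)⟩
  exact h _ _ (hmem _) (hmem _) (ht (Fin.castSucc_lt_succ (i := i)))

lemma strictMono_cons {n : ℕ} {t : Fin (n + 1) → ℝ} (ht : StrictMono t) (ha : a < t 0) :
    StrictMono (Fin.cons a t : Fin (n + 2) → ℝ) := by
  intro i j hij
  induction i using Fin.cases with
  | zero =>
      induction j using Fin.cases with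
      | zero => exact absurd hij (lt_irrefl _)
      | succ j => simpa using lt_of_lt_of_le ha (ht.monotone (Fin.zero_le j))
  | succ i =>
      induction j using Fin.cases with
      | zero => exact absurd hij (by simp [Fin.lt_def])
      | succ j =>
          simp only [Fin.cons_succ]
          exact ht (by simpa [Fin.succ_lt_succ_iff] using hij)

lemma tauLen_le_add_left (ham : a < m) (hmb : m ≤ b) :
    tauLen T γ a b ≤ T (γ a) (γ m) + tauLen T γ m b := by
  rcases eq_or_lt_of_le hmb with rfl | hmb
  · simpa [tauLen_self] using tauLen_le_pair (T := T) (γ := γ) (le_of_lt ham)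
  · rw [add_comm]
    conv_rhs => rw [tauLen]
    rw [ENNReal.sInf_add]
    refine le_iInf fun v => le_iInf fun hv => ?_
    obtain ⟨n, t, ht, h0, hl, rfl⟩ := hv
    have hcons : StrictMono (Fin.cons a t : Fin (n + 2) → ℝ) :=
      strictMono_cons ht (h0 ▸ ham)
    have h0' : (Fin.cons a t : Fin (n + 2) → ℝ) 0 = a := rfl
    have hl' : (Fin.cons a t : Fin (n + 2) → ℝ) (Fin.last (n + 1)) = b := by
      rw [← Fin.succ_last, Fin.cons_succ]; exact hl
    have hle := tauLen_le_sum (T := T) (γ := γ) hcons h0' hl'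
    refine hle.trans ?_
    rw [Fin.sum_univ_succ]
    have ehead : T (γ ((Fin.cons a t : Fin (n + 2) → ℝ) (Fin.castSucc 0)))
        (γ ((Fin.cons a t : Fin (n + 2) → ℝ) (Fin.succ 0))) = T (γ a) (γ m) := by
      simp [h0]
    have etail : ∑ i : Fin n, T (γ ((Fin.cons a t : Fin (n + 2) → ℝ) (Fin.succ i).castSucc))
        (γ ((Fin.cons a t : Fin (n + 2) → ℝ) (Fin.succ i).succ)) =
        ∑ i : Fin n, T (γ (t i.castSucc)) (γ (t i.succ)) := by
      refine Finset.sum_congr rfl fun i _ => ?_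
      rw [← Fin.succ_castSucc, Fin.cons_succ, Fin.cons_succ]
    rw [ehead, etail, add_comm]

lemma tauLen_superadd (hab : a ≤ b) (hbc : b ≤ c)
    (hrev : ∀ u w, a ≤ u → u < b → b < w → w ≤ c →
      T (γ u) (γ b) + T (γ b) (γ w) ≤ T (γ u) (γ w)) :
    tauLen T γ a b + tauLen T γ b c ≤ tauLen T γ a c := by
  rcases eq_or_lt_of_le hab with rfl | hab
  · simp [tauLen_self]
  rcases eq_or_lt_of_le hbc with rfl | hbc
  · simp [tauLen_self]
  have key : ∀ n : ℕ, ∀ a' : ℝ, a ≤ a' → a' ≤ b → ∀ t : Fin (n + 1) → ℝ, StrictMono t →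
      t 0 = a' → t (Fin.last n) = c →
      tauLen T γ a' b + tauLen T γ b c ≤ ∑ i : Fin n, T (γ (t i.castSucc)) (γ (t i.succ)) := by
    intro n
    induction n with
    | zero =>
        intro a' haa' ha'b t ht h0 hl
        have hac : a' = c := by rw [← h0, ← hl]; rfl
        exact absurd (lt_of_le_of_lt ha'b (hac ▸ hbc)) (lt_irrefl _)
    | succ n ih =>
        intro a' haa' ha'b t ht h0 hl
        have h01 : a' < t 1 := by
          rw [← h0]
          refine ht ?_
          rw [Fin.lt_def]
          simp
        have ht1c : t 1 ≤ c := by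
          rw [← hl]; exact ht.monotone (Fin.le_last _)
        have htail : StrictMono (fun i : Fin (n + 1) => t i.succ) :=
          ht.comp Fin.strictMono_succ
        have htail0 : (fun i : Fin (n + 1) => t i.succ) 0 = t 1 := by
          simp [Fin.succ_zero_eq_one]
        have htaill : (fun i : Fin (n + 1) => t i.succ) (Fin.last n) = c := by
          simp only [Fin.succ_last]; exact hl
        have e0 : t (Fin.castSucc 0) = a' := by simpa using h0
        have e1 : t (Fin.succ 0) = t 1 := by rw [Fin.succ_zero_eq_one]
        have hsum : ∑ i : Fin (n + 1), T (γ (t i.castSucc)) (γ (t i.succ)) =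
            T (γ a') (γ (t 1)) + ∑ i : Fin n, T (γ (t i.succ.castSucc)) (γ (t i.succ.succ)) := by
          rw [Fin.sum_univ_succ, e0, e1]
        have htc : tauLen T γ (t 1) c ≤
            ∑ i : Fin n, T (γ (t i.succ.castSucc)) (γ (t i.succ.succ)) := by
          have h' := tauLen_le_sum (T := T) (γ := γ) htail htail0 htaill
          refine h'.trans (le_of_eq ?_)
          exact Finset.sum_congr rfl fun i _ => by simp only [Fin.succ_castSucc]
        rcases le_or_gt (t 1) b with h1b | h1b
        · have hih := ih (t 1) (haa'.trans h01.le) h1b (fun i => t i.succ) htail htail0 htaill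
          have hstep : tauLen T γ a' b ≤ T (γ a') (γ (t 1)) + tauLen T γ (t 1) b :=
            tauLen_le_add_left h01 h1b
          have hih' : tauLen T γ (t 1) b + tauLen T γ b c ≤
              ∑ i : Fin n, T (γ (t i.succ.castSucc)) (γ (t i.succ.succ)) := by
            refine hih.trans (le_of_eq ?_)
            exact Finset.sum_congr rfl fun i _ => by simp only [Fin.succ_castSucc]
          calc tauLen T γ a' b + tauLen T γ b c
              ≤ (T (γ a') (γ (t 1)) + tauLen T γ (t 1) b) + tauLen T γ b c :=
                add_le_add_left hstep _
            _ = T (γ a') (γ (t 1)) + (tauLen T γ (t 1) b + tauLen T γ b c) := by ring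
            _ ≤ T (γ a') (γ (t 1)) +
                ∑ i : Fin n, T (γ (t i.succ.castSucc)) (γ (t i.succ.succ)) :=
                add_le_add_right hih' _
            _ = _ := by rw [hsum]
        · have htb : tauLen T γ b c ≤ T (γ b) (γ (t 1)) + tauLen T γ (t 1) c :=
            tauLen_le_add_left h1b ht1c
          rcases eq_or_lt_of_le ha'b with heq | ha'b
          · rw [heq] at hsum
            calc tauLen T γ a' b + tauLen T γ b c = tauLen T γ b c := by
                  rw [heq, tauLen_self, zero_add]
              _ ≤ T (γ b) (γ (t 1)) + tauLen T γ (t 1) c := htb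
              _ ≤ T (γ b) (γ (t 1)) +
                  ∑ i : Fin n, T (γ (t i.succ.castSucc)) (γ (t i.succ.succ)) :=
                  add_le_add_right htc _
              _ = _ := by rw [hsum]
          · have hpair : tauLen T γ a' b ≤ T (γ a') (γ b) := tauLen_le_pair ha'b.le
            have hr : T (γ a') (γ b) + T (γ b) (γ (t 1)) ≤ T (γ a') (γ (t 1)) :=
              hrev a' (t 1) haa' ha'b h1b ht1c
            calc tauLen T γ a' b + tauLen T γ b c
                ≤ T (γ a') (γ b) + (T (γ b) (γ (t 1)) + tauLen T γ (t 1) c) :=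
                  add_le_add hpair htb
              _ = (T (γ a') (γ b) + T (γ b) (γ (t 1))) + tauLen T γ (t 1) c := by ring
              _ ≤ T (γ a') (γ (t 1)) + tauLen T γ (t 1) c := add_le_add_left hr _
              _ ≤ T (γ a') (γ (t 1)) +
                  ∑ i : Fin n, T (γ (t i.succ.castSucc)) (γ (t i.succ.succ)) :=
                  add_le_add_right htc _
              _ = _ := by rw [hsum]
  conv_rhs => rw [tauLen]
  refine le_sInf ?_
  rintro v ⟨n, t, ht, h0, hl, rfl⟩
  exact key n a le_rfl hab.le t ht h0 hl

end TauLen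
section Amalg

variable {X₁ X₂ : Type*} {A₁ : Set X₁} {f : X₁ → X₂}
variable {le₁ : X₁ → X₁ → Prop} {le₂ : X₂ → X₂ → Prop}
variable {τ₁ : X₁ → X₁ → ENNReal} {τ₂ : X₂ → X₂ → ENNReal}

lemma glueEqv_symm' : ∀ p q : X₁ ⊕ X₂, glueEqv A₁ f p q → glueEqv A₁ f q p :=
  fun _ _ h => glueEqv_symm h

lemma glueEqv_trans' : ∀ p q r : X₁ ⊕ X₂, glueEqv A₁ f p q → glueEqv A₁ f q r → glueEqv A₁ f p r :=
  fun _ _ _ h h' => glueEqv_trans h h'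

lemma out_eqv (u : X₁ ⊕ X₂) :
    glueEqv A₁ f ((Quotient.mk (glueSetoid A₁ f) u).out) u := by
  have h : Quotient.mk (glueSetoid A₁ f) ((Quotient.mk (glueSetoid A₁ f) u).out) =
      Quotient.mk (glueSetoid A₁ f) u := Quotient.out_eq _
  exact Quotient.exact h

lemma eqv_out (u : X₁ ⊕ X₂) :
    glueEqv A₁ f u ((Quotient.mk (glueSetoid A₁ f) u).out) :=
  glueEqv_symm (out_eqv u)

lemma mk_eq_of_eqv {u v : X₁ ⊕ X₂} (h : glueEqv A₁ f u v) :
    Quotient.mk (glueSetoid A₁ f) u = Quotient.mk (glueSetoid A₁ f) v :=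
  Quotient.sound h

/-- A crossing pair: identified points in different factors. -/
def CrossPair (A₁ : Set X₁) (f : X₁ → X₂) (c c' : X₁ ⊕ X₂) : Prop :=
  (∃ a ∈ A₁, c = Sum.inl a ∧ c' = Sum.inr (f a)) ∨
    (∃ a ∈ A₁, c' = Sum.inl a ∧ c = Sum.inr (f a))

lemma CrossPair.eqv {c c' : X₁ ⊕ X₂} (h : CrossPair A₁ f c c') : glueEqv A₁ f c c' := by
  rcases h with ⟨a, ha, rfl, rfl⟩ | ⟨a, ha, rfl, rfl⟩
  · exact glueEqv_of_mem ha
  · exact glueEqv_symm (glueEqv_of_mem ha)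

lemma glueEqv_eq_or_cross (hinj : Set.InjOn f A₁) {p q : X₁ ⊕ X₂} (h : glueEqv A₁ f p q) :
    p = q ∨ CrossPair A₁ f p q :=
  (glueEqv_iff hinj).1 h

lemma sumRel_trans (le₁_trans : ∀ x y z, le₁ x y → le₁ y z → le₁ x z)
    (le₂_trans : ∀ x y z, le₂ x y → le₂ y z → le₂ x z) :
    ∀ x y z : X₁ ⊕ X₂, sumRel le₁ le₂ x y → sumRel le₁ le₂ y z → sumRel le₁ le₂ x z := by
  rintro (x | x) (y | y) (z | z) h h' <;>
    first
      | exact le₁_trans _ _ _ h h'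
      | exact le₂_trans _ _ _ h h'
      | exact False.elim h
      | exact False.elim h'

lemma sumTau_revtri (rev_tri₁ : ∀ x y z, le₁ x y → le₁ y z → τ₁ x y + τ₁ y z ≤ τ₁ x z)
    (rev_tri₂ : ∀ x y z, le₂ x y → le₂ y z → τ₂ x y + τ₂ y z ≤ τ₂ x z) :
    ∀ x y z : X₁ ⊕ X₂, sumRel le₁ le₂ x y → sumRel le₁ le₂ y z →
      sumTau τ₁ τ₂ x y + sumTau τ₁ τ₂ y z ≤ sumTau τ₁ τ₂ x z := by
  rintro (x | x) (y | y) (z | z) h h' <;>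
    first
      | exact rev_tri₁ _ _ _ h h'
      | exact rev_tri₂ _ _ _ h h'
      | exact False.elim h
      | exact False.elim h'

lemma cross_pull (hpres_le : ∀ a ∈ A₁, ∀ b ∈ A₁, (le₁ a b ↔ le₂ (f a) (f b)))
    (hpres_tau : ∀ a ∈ A₁, ∀ b ∈ A₁, τ₁ a b = τ₂ (f a) (f b))
    {m u c c' : X₁ ⊕ X₂} (hcr1 : CrossPair A₁ f m u) (hcr2 : CrossPair A₁ f c c')
    (hle : sumRel le₁ le₂ u c) :
    sumRel le₁ le₂ m c' ∧ sumTau τ₁ τ₂ m c' = sumTau τ₁ τ₂ u c := by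
  rcases hcr1 with ⟨a, ha, rfl, rfl⟩ | ⟨a, ha, rfl, rfl⟩
  · -- m = inl a, u = inr (f a); so c = inr _, c' = inl _
    rcases hcr2 with ⟨b, hb, rfl, rfl⟩ | ⟨b, hb, rfl, rfl⟩
    · exact absurd hle (by simp [sumRel])
    · refine ⟨?_, ?_⟩
      · have : le₂ (f a) (f b) := hle
        exact (hpres_le a ha b hb).2 this
      · simp only [sumTau]
        exact hpres_tau a ha b hb
  · -- u = inl a, m = inr (f a); so c = inl _, c' = inr _
    rcases hcr2 with ⟨b, hb, rfl, rfl⟩ | ⟨b, hb, rfl, rfl⟩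
    · refine ⟨?_, ?_⟩
      · have : le₁ a b := hle
        exact (hpres_le a ha b hb).1 this
      · simp only [sumTau]
        exact (hpres_tau a ha b hb).symm
    · exact absurd hle (by simp [sumRel])

/-- Reduction of causal chains to a single pair or a single crossing. -/
lemma chain_reduce (hinj : Set.InjOn f A₁)
    (le₁_trans : ∀ x y z, le₁ x y → le₁ y z → le₁ x z)
    (le₂_trans : ∀ x y z, le₂ x y → le₂ y z → le₂ x z)
    (rev_tri₁ : ∀ x y z, le₁ x y → le₁ y z → τ₁ x y + τ₁ y z ≤ τ₁ x z)
    (rev_tri₂ : ∀ x y z, le₂ x y → le₂ y z → τ₂ x y + τ₂ y z ≤ τ₂ x z)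
    (hpres_le : ∀ a ∈ A₁, ∀ b ∈ A₁, (le₁ a b ↔ le₂ (f a) (f b)))
    (hpres_tau : ∀ a ∈ A₁, ∀ b ∈ A₁, τ₁ a b = τ₂ (f a) (f b)) :
    ∀ (l : List ((X₁ ⊕ X₂) × (X₁ ⊕ X₂))) (x y : X₁ ⊕ X₂),
    IsCausalChain (sumRel le₁ le₂) (glueEqv A₁ f) x y l →
    (∃ u v, glueEqv A₁ f x u ∧ glueEqv A₁ f v y ∧ sumRel le₁ le₂ u v ∧
      (l.map fun p => sumTau τ₁ τ₂ p.1 p.2).sum ≤ sumTau τ₁ τ₂ u v) ∨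
    (∃ u c c' v, glueEqv A₁ f x u ∧ glueEqv A₁ f v y ∧ sumRel le₁ le₂ u c ∧
      CrossPair A₁ f c c' ∧ sumRel le₁ le₂ c' v ∧
      (l.map fun p => sumTau τ₁ τ₂ p.1 p.2).sum ≤ sumTau τ₁ τ₂ u c + sumTau τ₁ τ₂ c' v) := by
  intro l
  induction l with
  | nil => intro x y h; exact absurd rfl h.1.1
  | cons hd rest ih =>
      intro x y h
      rcases eq_or_ne rest [] with rfl | hne
      · -- singleton chain
        obtain ⟨⟨_, _, ⟨p', hp', hx⟩, ⟨q', hq', hy⟩⟩, hle⟩ := h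
        cases Option.some.inj hp'
        cases Option.some.inj hq'
        refine Or.inl ⟨hd.1, hd.2, hx, hy, hle _ (by simp), ?_⟩
        simp
      · obtain ⟨hx, hhd, hrest⟩ := h.cons_decomp hne
        have hsum : ((hd :: rest).map fun p => sumTau τ₁ τ₂ p.1 p.2).sum =
            sumTau τ₁ τ₂ hd.1 hd.2 + (rest.map fun p => sumTau τ₁ τ₂ p.1 p.2).sum := by
          simp
        rcases ih hd.2 y hrest with ⟨u, v, h1, h2, h3, h4⟩ | ⟨u, c, c', v, h1, h2, h3, hcr, h5, h6⟩
        · rcases glueEqv_eq_or_cross hinj h1 with rfl | hcross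
          · -- merge
            refine Or.inl ⟨hd.1, v, hx, h2, sumRel_trans le₁_trans le₂_trans _ _ _ hhd h3, ?_⟩
            rw [hsum]
            calc sumTau τ₁ τ₂ hd.1 hd.2 + (rest.map fun p => sumTau τ₁ τ₂ p.1 p.2).sum
                ≤ sumTau τ₁ τ₂ hd.1 hd.2 + sumTau τ₁ τ₂ hd.2 v := add_le_add_right h4 _
              _ ≤ sumTau τ₁ τ₂ hd.1 v := sumTau_revtri rev_tri₁ rev_tri₂ _ _ _ hhd h3
          · refine Or.inr ⟨hd.1, hd.2, u, v, hx, h2, hhd, hcross, h3, ?_⟩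
            rw [hsum]
            exact add_le_add_right h4 _
        · rcases glueEqv_eq_or_cross hinj h1 with rfl | hcross
          · -- merge head into the first leg
            refine Or.inr ⟨hd.1, c, c', v, hx, h2,
              sumRel_trans le₁_trans le₂_trans _ _ _ hhd h3, hcr, h5, ?_⟩
            rw [hsum]
            calc sumTau τ₁ τ₂ hd.1 hd.2 + (rest.map fun p => sumTau τ₁ τ₂ p.1 p.2).sum
                ≤ sumTau τ₁ τ₂ hd.1 hd.2 + (sumTau τ₁ τ₂ hd.2 c + sumTau τ₁ τ₂ c' v) :=
                  add_le_add_right h6 _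
              _ = (sumTau τ₁ τ₂ hd.1 hd.2 + sumTau τ₁ τ₂ hd.2 c) + sumTau τ₁ τ₂ c' v := by ring
              _ ≤ sumTau τ₁ τ₂ hd.1 c + sumTau τ₁ τ₂ c' v :=
                  add_le_add_left (sumTau_revtri rev_tri₁ rev_tri₂ _ _ _ hhd h3) _
          · -- pull the first leg back across the crossing
            obtain ⟨hle', htau'⟩ := cross_pull hpres_le hpres_tau hcross hcr h3
            have hlast : sumRel le₁ le₂ hd.1 v :=
              sumRel_trans le₁_trans le₂_trans _ _ _ hhd
                (sumRel_trans le₁_trans le₂_trans _ _ _ hle' h5)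
            refine Or.inl ⟨hd.1, v, hx, h2, hlast, ?_⟩
            rw [hsum]
            calc sumTau τ₁ τ₂ hd.1 hd.2 + (rest.map fun p => sumTau τ₁ τ₂ p.1 p.2).sum
                ≤ sumTau τ₁ τ₂ hd.1 hd.2 + (sumTau τ₁ τ₂ hd.2 c' + sumTau τ₁ τ₂ c' v) := by
                  rw [htau']
                  exact add_le_add_right h6 _
              _ = (sumTau τ₁ τ₂ hd.1 hd.2 + sumTau τ₁ τ₂ hd.2 c') + sumTau τ₁ τ₂ c' v := by ring
              _ ≤ sumTau τ₁ τ₂ hd.1 c' + sumTau τ₁ τ₂ c' v :=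
                  add_le_add_left (sumTau_revtri rev_tri₁ rev_tri₂ _ _ _ hhd hle') _
              _ ≤ sumTau τ₁ τ₂ hd.1 v := sumTau_revtri rev_tri₁ rev_tri₂ _ _ _
                  (sumRel_trans le₁_trans le₂_trans _ _ _ hhd hle') h5

end Amalg
section Curves

variable {X₁ X₂ : Type*} [MetricSpace X₁] [MetricSpace X₂] {A₁ : Set X₁} {f : X₁ → X₂}
variable {le₁ : X₁ → X₁ → Prop} {le₂ : X₂ → X₂ → Prop}
variable {τ₁ : X₁ → X₁ → ENNReal} {τ₂ : X₂ → X₂ → ENNReal}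

lemma inl_causal {γ : ℝ → X₁} {a b : ℝ}
    (h : IsCausalCurveE (fun u w => edist u w) le₁ γ a b) :
    IsCausalCurveE sumEDist (sumRel le₁ le₂) (fun t => (Sum.inl (γ t) : X₁ ⊕ X₂)) a b := by
  obtain ⟨hab, hlip, hcaus⟩ := h
  refine ⟨hab, ?_, ?_⟩
  · intro t ht
    obtain ⟨K, ε, hε, hK⟩ := hlip t ht
    exact ⟨K, ε, hε, fun s hs s' hs' h1 h2 => by
      simpa [sumEDist] using hK s hs s' hs' h1 h2⟩
  · intro s hs t ht hst
    simpa [sumRel] using hcaus s hs t ht hst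

lemma inr_causal {γ : ℝ → X₂} {a b : ℝ}
    (h : IsCausalCurveE (fun u w => edist u w) le₂ γ a b) :
    IsCausalCurveE sumEDist (sumRel le₁ le₂) (fun t => (Sum.inr (γ t) : X₁ ⊕ X₂)) a b := by
  obtain ⟨hab, hlip, hcaus⟩ := h
  refine ⟨hab, ?_, ?_⟩
  · intro t ht
    obtain ⟨K, ε, hε, hK⟩ := hlip t ht
    exact ⟨K, ε, hε, fun s hs s' hs' h1 h2 => by
      simpa [sumEDist] using hK s hs s' hs' h1 h2⟩
  · intro s hs t ht hst
    simpa [sumRel] using hcaus s hs t ht hst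

lemma tauLen_inl {γ : ℝ → X₁} {a b : ℝ} :
    tauLen (sumTau τ₁ τ₂) (fun t => (Sum.inl (γ t) : X₁ ⊕ X₂)) a b = tauLen τ₁ γ a b :=
  le_antisymm (tauLen_le_tauLen fun u w _ _ _ => by simp [sumTau])
    (tauLen_le_tauLen fun u w _ _ _ => by simp [sumTau])

lemma tauLen_inr {γ : ℝ → X₂} {a b : ℝ} :
    tauLen (sumTau τ₁ τ₂) (fun t => (Sum.inr (γ t) : X₁ ⊕ X₂)) a b = tauLen τ₂ γ a b :=
  le_antisymm (tauLen_le_tauLen fun u w _ _ _ => by simp [sumTau])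
    (tauLen_le_tauLen fun u w _ _ _ => by simp [sumTau])

lemma qDist_mk_le (u v : X₁ ⊕ X₂) :
    qDist A₁ f (Quotient.mk (glueSetoid A₁ f) u) (Quotient.mk (glueSetoid A₁ f) v) ≤
      sumEDist u v :=
  quotDist_le_single (out_eqv u) (eqv_out v)

lemma qDist_mk_le₂ {m m' : X₁ ⊕ X₂} (u w : X₁ ⊕ X₂) (hj : glueEqv A₁ f m m') :
    qDist A₁ f (Quotient.mk (glueSetoid A₁ f) u) (Quotient.mk (glueSetoid A₁ f) w) ≤
      sumEDist u m + sumEDist m' w :=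
  quotDist_le_pair (out_eqv u) hj (eqv_out w)

lemma qRel_mk {u v : X₁ ⊕ X₂} (h : sumRel le₁ le₂ u v) :
    qRel A₁ f (sumRel le₁ le₂) (Quotient.mk (glueSetoid A₁ f) u)
      (Quotient.mk (glueSetoid A₁ f) v) :=
  ⟨u, v, rfl, rfl, Relation.TransGen.single ⟨u, v, glueEqv_refl u, h, glueEqv_refl v⟩⟩

lemma qRel_mk₂ {u m m' w : X₁ ⊕ X₂} (h1 : sumRel le₁ le₂ u m) (hj : glueEqv A₁ f m m')
    (h2 : sumRel le₁ le₂ m' w) :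
    qRel A₁ f (sumRel le₁ le₂) (Quotient.mk (glueSetoid A₁ f) u)
      (Quotient.mk (glueSetoid A₁ f) w) :=
  ⟨u, w, rfl, rfl, Relation.TransGen.tail
    (Relation.TransGen.single ⟨u, m, glueEqv_refl u, h1, glueEqv_refl m⟩)
    ⟨m', w, hj, h2, glueEqv_refl w⟩⟩

lemma qTau_mk (u v : X₁ ⊕ X₂) :
    qTau A₁ f τ₁ τ₂ le₁ le₂ (Quotient.mk (glueSetoid A₁ f) u)
        (Quotient.mk (glueSetoid A₁ f) v) =
      quotTau (sumTau τ₁ τ₂) (sumRel le₁ le₂) (glueEqv A₁ f) u v :=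
  quotTau_congr glueEqv_symm' glueEqv_trans' (out_eqv u) (out_eqv v)

lemma tau_le_qTau_mk {u v : X₁ ⊕ X₂} (h : sumRel le₁ le₂ u v) :
    sumTau τ₁ τ₂ u v ≤ qTau A₁ f τ₁ τ₂ le₁ le₂ (Quotient.mk (glueSetoid A₁ f) u)
      (Quotient.mk (glueSetoid A₁ f) v) := by
  rw [qTau_mk]
  exact tau_le_quotTau (glueEqv_refl u) h (glueEqv_refl v)

lemma qTau_add_le {u m w : X₁ ⊕ X₂}
    (h1 : ∃ l, IsCausalChain (sumRel le₁ le₂) (glueEqv A₁ f) u m l)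
    (h2 : ∃ l, IsCausalChain (sumRel le₁ le₂) (glueEqv A₁ f) m w l) :
    qTau A₁ f τ₁ τ₂ le₁ le₂ (Quotient.mk (glueSetoid A₁ f) u)
        (Quotient.mk (glueSetoid A₁ f) m) +
      qTau A₁ f τ₁ τ₂ le₁ le₂ (Quotient.mk (glueSetoid A₁ f) m)
        (Quotient.mk (glueSetoid A₁ f) w) ≤
      qTau A₁ f τ₁ τ₂ le₁ le₂ (Quotient.mk (glueSetoid A₁ f) u)
        (Quotient.mk (glueSetoid A₁ f) w) := by
  rw [qTau_mk, qTau_mk, qTau_mk]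
  exact quotTau_add_quotTau_le glueEqv_trans' h1 h2

lemma push_causal {γ : ℝ → X₁ ⊕ X₂} {a b : ℝ}
    (h : IsCausalCurveE sumEDist (sumRel le₁ le₂) γ a b) :
    IsCausalCurveE (qDist A₁ f) (qRel A₁ f (sumRel le₁ le₂))
      (fun t => Quotient.mk (glueSetoid A₁ f) (γ t)) a b := by
  obtain ⟨hab, hlip, hcaus⟩ := h
  refine ⟨hab, ?_, ?_⟩
  · intro t ht
    obtain ⟨K, ε, hε, hK⟩ := hlip t ht
    exact ⟨K, ε, hε, fun s hs s' hs' h1 h2 =>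
      le_trans (qDist_mk_le _ _) (hK s hs s' hs' h1 h2)⟩
  · intro s hs t ht hst
    exact qRel_mk (hcaus s hs t ht hst)

lemma push_tauLen {γ : ℝ → X₁ ⊕ X₂} {a b : ℝ}
    (h : IsCausalCurveE sumEDist (sumRel le₁ le₂) γ a b) :
    tauLen (sumTau τ₁ τ₂) γ a b ≤
      tauLen (qTau A₁ f τ₁ τ₂ le₁ le₂) (fun t => Quotient.mk (glueSetoid A₁ f) (γ t)) a b :=
  tauLen_le_tauLen fun u w hu hw huw => tau_le_qTau_mk (h.2.2 u hu w hw huw)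

lemma lsc_nbhd_fst {X Y : Type*} [TopologicalSpace X] [TopologicalSpace Y]
    {F : X × Y → ENNReal} (h : LowerSemicontinuous F) {x : X} {y : Y} {r : ENNReal}
    (hr : r < F (x, y)) : ∃ V ∈ nhds x, ∀ z ∈ V, r < F (z, y) := by
  have hmem : {w : X × Y | r < F w} ∈ nhds (x, y) := h (x, y) r hr
  rw [mem_nhds_prod_iff] at hmem
  obtain ⟨U, hU, V, hV, hUV⟩ := hmem
  exact ⟨U, hU, fun z hz => hUV ⟨hz, mem_of_mem_nhds hV⟩⟩

lemma lsc_nbhd_snd {X Y : Type*} [TopologicalSpace X] [TopologicalSpace Y]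
    {F : X × Y → ENNReal} (h : LowerSemicontinuous F) {x : X} {y : Y} {r : ENNReal}
    (hr : r < F (x, y)) : ∃ V ∈ nhds y, ∀ z ∈ V, r < F (x, z) := by
  have hmem : {w : X × Y | r < F w} ∈ nhds (x, y) := h (x, y) r hr
  rw [mem_nhds_prod_iff] at hmem
  obtain ⟨U, hU, V, hV, hUV⟩ := hmem
  exact ⟨V, hV, fun z hz => hUV ⟨mem_of_mem_nhds hU, hz⟩⟩

end Curves
section Concat

variable {X₁ X₂ : Type*} [MetricSpace X₁] [MetricSpace X₂] {A₁ : Set X₁} {f : X₁ → X₂}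
variable {le₁ : X₁ → X₁ → Prop} {le₂ : X₂ → X₂ → Prop}
variable {τ₁ : X₁ → X₁ → ENNReal} {τ₂ : X₂ → X₂ → ENNReal}

lemma concat_curves {γ₁ γ₂ : ℝ → X₁ ⊕ X₂} {a₁ b₁ a₂ b₂ : ℝ}
    (h₁ : IsCausalCurveE sumEDist (sumRel le₁ le₂) γ₁ a₁ b₁)
    (h₂ : IsCausalCurveE sumEDist (sumRel le₁ le₂) γ₂ a₂ b₂)
    (hj : glueEqv A₁ f (γ₁ b₁) (γ₂ a₂)) :
    ∃ Γ a c, IsCausalCurveE (qDist A₁ f) (qRel A₁ f (sumRel le₁ le₂)) Γ a c ∧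
      Γ a = Quotient.mk (glueSetoid A₁ f) (γ₁ a₁) ∧
      Γ c = Quotient.mk (glueSetoid A₁ f) (γ₂ b₂) ∧
      tauLen (sumTau τ₁ τ₂) γ₁ a₁ b₁ + tauLen (sumTau τ₁ τ₂) γ₂ a₂ b₂ ≤
        tauLen (qTau A₁ f τ₁ τ₂ le₁ le₂) Γ a c := by
  obtain ⟨hab₁, hlip₁, hcaus₁⟩ := h₁
  obtain ⟨hab₂, hlip₂, hcaus₂⟩ := h₂
  set c := b₁ + (b₂ - a₂) with hc
  have hb₁c : b₁ ≤ c := by rw [hc]; linarith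
  have ha₁c : a₁ ≤ c := le_trans hab₁ hb₁c
  set Γ : ℝ → Quotient (glueSetoid A₁ f) := fun t =>
    if t < b₁ then Quotient.mk (glueSetoid A₁ f) (γ₁ t)
    else Quotient.mk (glueSetoid A₁ f) (γ₂ (t + (a₂ - b₁))) with hΓdef
  have hΓ₁ : ∀ t, t ≤ b₁ → Γ t = Quotient.mk (glueSetoid A₁ f) (γ₁ t) := by
    intro t htb
    rcases lt_or_eq_of_le htb with h | rfl
    · simp only [hΓdef]; rw [if_pos h]
    · simp only [hΓdef]; rw [if_neg (lt_irrefl t)]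
      have e : t + (a₂ - t) = a₂ := by ring
      rw [e]
      exact (mk_eq_of_eqv hj).symm
  have hΓ₂ : ∀ t, b₁ ≤ t → Γ t = Quotient.mk (glueSetoid A₁ f) (γ₂ (t + (a₂ - b₁))) := by
    intro t htb
    simp only [hΓdef]; rw [if_neg (not_lt.mpr htb)]
  have hσmem : ∀ t, t ∈ Icc b₁ c → t + (a₂ - b₁) ∈ Icc a₂ b₂ := by
    intro t ht
    constructor
    · linarith [ht.1]
    · have := ht.2
      rw [hc] at this
      linarith
  refine ⟨Γ, a₁, c, ⟨ha₁c, ?_, ?_⟩, hΓ₁ a₁ hab₁, ?_, ?_⟩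
  · -- Lipschitz
    intro t ht
    rcases lt_trichotomy t b₁ with htb | heq | htb
    · obtain ⟨K, ε, hε, hK⟩ := hlip₁ t ⟨ht.1, htb.le⟩
      refine ⟨K, min ε (b₁ - t), lt_min hε (by linarith), ?_⟩
      intro s hs s' hs' h1 h2
      have hsb : s < b₁ := by
        have := (abs_lt.1 (lt_of_lt_of_le h1 (min_le_right _ _))).2
        linarith
      have hsb' : s' < b₁ := by
        have := (abs_lt.1 (lt_of_lt_of_le h2 (min_le_right _ _))).2
        linarith
      rw [hΓ₁ s hsb.le, hΓ₁ s' hsb'.le]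
      exact le_trans (qDist_mk_le _ _)
        (hK s ⟨hs.1, hsb.le⟩ s' ⟨hs'.1, hsb'.le⟩
          (lt_of_lt_of_le h1 (min_le_left _ _)) (lt_of_lt_of_le h2 (min_le_left _ _)))
    · -- t = b₁
      subst heq
      obtain ⟨K₁, ε₁, hε₁, hK₁⟩ := hlip₁ t ⟨ht.1, le_rfl⟩
      obtain ⟨K₂, ε₂, hε₂, hK₂⟩ := hlip₂ a₂ ⟨le_rfl, hab₂⟩
      refine ⟨K₁ + K₂, min ε₁ ε₂, lt_min hε₁ hε₂, ?_⟩
      intro s hs s' hs' h1 h2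
      have h1a : |s - t| < ε₁ := lt_of_lt_of_le h1 (min_le_left _ _)
      have h1b : |s - t| < ε₂ := lt_of_lt_of_le h1 (min_le_right _ _)
      have h2a : |s' - t| < ε₁ := lt_of_lt_of_le h2 (min_le_left _ _)
      have h2b : |s' - t| < ε₂ := lt_of_lt_of_le h2 (min_le_right _ _)
      have hcoe : ((K₁ + K₂ : NNReal) : ENNReal) = (K₁ : ENNReal) + K₂ := by
        exact_mod_cast rfl
      rcases le_or_gt s t with hsb | hsb <;> rcases le_or_gt s' t with hsb' | hsb'
      · -- both in piece 1
        rw [hΓ₁ s hsb, hΓ₁ s' hsb']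
        refine le_trans (qDist_mk_le _ _) ?_
        refine le_trans (hK₁ s ⟨hs.1, hsb⟩ s' ⟨hs'.1, hsb'⟩ h1a h2a) ?_
        exact mul_le_mul_left (by exact_mod_cast le_self_add) _
      · -- s ≤ t < s'
        rw [hΓ₁ s hsb, hΓ₂ s' hsb'.le]
        refine le_trans (qDist_mk_le₂ (γ₁ s) (γ₂ (s' + (a₂ - t))) hj) ?_
        have e1 : sumEDist (γ₁ s) (γ₁ t) ≤ (K₁ : ENNReal) * ENNReal.ofReal |s - t| :=
          hK₁ s ⟨hs.1, hsb⟩ t ⟨hab₁, le_rfl⟩ h1a (by simpa using hε₁)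
        have hssm : s' + (a₂ - t) ∈ Icc a₂ b₂ := hσmem s' ⟨hsb'.le, hs'.2⟩
        have e2 : sumEDist (γ₂ a₂) (γ₂ (s' + (a₂ - t))) ≤
            (K₂ : ENNReal) * ENNReal.ofReal |a₂ - (s' + (a₂ - t))| := by
          refine hK₂ a₂ ⟨le_rfl, hab₂⟩ _ hssm (by simpa using hε₂) ?_
          have e : s' + (a₂ - t) - a₂ = s' - t := by ring
          rw [e]
          exact h2b
        have habs1 : |s - t| ≤ |s - s'| := by
          rw [abs_of_nonpos (by linarith), abs_of_nonpos (by linarith)]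
          linarith
        have habs2 : |a₂ - (s' + (a₂ - t))| ≤ |s - s'| := by
          have e : a₂ - (s' + (a₂ - t)) = t - s' := by ring
          rw [e, abs_of_nonpos (by linarith), abs_of_nonpos (by linarith)]
          linarith
        calc sumEDist (γ₁ s) (γ₁ t) + sumEDist (γ₂ a₂) (γ₂ (s' + (a₂ - t)))
            ≤ (K₁ : ENNReal) * ENNReal.ofReal |s - s'| +
              (K₂ : ENNReal) * ENNReal.ofReal |s - s'| := by
              refine add_le_add (le_trans e1 ?_) (le_trans e2 ?_)
              · exact mul_le_mul_right (ENNReal.ofReal_le_ofReal habs1) _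
              · exact mul_le_mul_right (ENNReal.ofReal_le_ofReal habs2) _
          _ = ((K₁ + K₂ : NNReal) : ENNReal) * ENNReal.ofReal |s - s'| := by
              rw [hcoe, add_mul]
      · -- s' ≤ t < s
        rw [hΓ₂ s hsb.le, hΓ₁ s' hsb']
        refine le_trans (qDist_mk_le₂ (γ₂ (s + (a₂ - t))) (γ₁ s') (glueEqv_symm hj)) ?_
        have hssm : s + (a₂ - t) ∈ Icc a₂ b₂ := hσmem s ⟨hsb.le, hs.2⟩
        have e1 : sumEDist (γ₂ (s + (a₂ - t))) (γ₂ a₂) ≤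
            (K₂ : ENNReal) * ENNReal.ofReal |s + (a₂ - t) - a₂| := by
          refine hK₂ _ hssm a₂ ⟨le_rfl, hab₂⟩ ?_ (by simpa using hε₂)
          have e : s + (a₂ - t) - a₂ = s - t := by ring
          rw [e]
          exact h1b
        have e2 : sumEDist (γ₁ t) (γ₁ s') ≤ (K₁ : ENNReal) * ENNReal.ofReal |t - s'| :=
          hK₁ t ⟨hab₁, le_rfl⟩ s' ⟨hs'.1, hsb'⟩ (by simpa using hε₁) h2a
        have habs1 : |s + (a₂ - t) - a₂| ≤ |s - s'| := by
          have e : s + (a₂ - t) - a₂ = s - t := by ring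
          rw [e, abs_of_nonneg (by linarith), abs_of_nonneg (by linarith)]
          linarith
        have habs2 : |t - s'| ≤ |s - s'| := by
          rw [abs_of_nonneg (by linarith), abs_of_nonneg (by linarith)]
          linarith
        calc sumEDist (γ₂ (s + (a₂ - t))) (γ₂ a₂) + sumEDist (γ₁ t) (γ₁ s')
            ≤ (K₂ : ENNReal) * ENNReal.ofReal |s - s'| +
              (K₁ : ENNReal) * ENNReal.ofReal |s - s'| := by
              refine add_le_add (le_trans e1 ?_) (le_trans e2 ?_)
              · exact mul_le_mul_right (ENNReal.ofReal_le_ofReal habs1) _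
              · exact mul_le_mul_right (ENNReal.ofReal_le_ofReal habs2) _
          _ = ((K₁ + K₂ : NNReal) : ENNReal) * ENNReal.ofReal |s - s'| := by
              rw [hcoe, add_mul, add_comm]
      · -- both in piece 2
        rw [hΓ₂ s hsb.le, hΓ₂ s' hsb'.le]
        refine le_trans (qDist_mk_le _ _) ?_
        have e1 : |s + (a₂ - t) - a₂| < ε₂ := by
          have e : s + (a₂ - t) - a₂ = s - t := by ring
          rw [e]; exact h1b
        have e2 : |s' + (a₂ - t) - a₂| < ε₂ := by
          have e : s' + (a₂ - t) - a₂ = s' - t := by ring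
          rw [e]; exact h2b
        have hK := hK₂ _ (hσmem s ⟨hsb.le, hs.2⟩) _ (hσmem s' ⟨hsb'.le, hs'.2⟩) e1 e2
        have e3 : |s + (a₂ - t) - (s' + (a₂ - t))| = |s - s'| := by
          have e : s + (a₂ - t) - (s' + (a₂ - t)) = s - s' := by ring
          rw [e]
        rw [e3] at hK
        refine le_trans hK ?_
        exact mul_le_mul_left (by exact_mod_cast le_add_self) _
    · -- t > b₁
      obtain ⟨K, ε, hε, hK⟩ := hlip₂ (t + (a₂ - b₁)) (hσmem t ⟨htb.le, ht.2⟩)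
      refine ⟨K, min ε (t - b₁), lt_min hε (by linarith), ?_⟩
      intro s hs s' hs' h1 h2
      have hsb : b₁ < s := by
        have := (abs_lt.1 (lt_of_lt_of_le h1 (min_le_right _ _))).1
        linarith
      have hsb' : b₁ < s' := by
        have := (abs_lt.1 (lt_of_lt_of_le h2 (min_le_right _ _))).1
        linarith
      rw [hΓ₂ s hsb.le, hΓ₂ s' hsb'.le]
      refine le_trans (qDist_mk_le _ _) ?_
      have e1 : |s + (a₂ - b₁) - (t + (a₂ - b₁))| < ε := by
        have e : s + (a₂ - b₁) - (t + (a₂ - b₁)) = s - t := by ring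
        rw [e]; exact lt_of_lt_of_le h1 (min_le_left _ _)
      have e2 : |s' + (a₂ - b₁) - (t + (a₂ - b₁))| < ε := by
        have e : s' + (a₂ - b₁) - (t + (a₂ - b₁)) = s' - t := by ring
        rw [e]; exact lt_of_lt_of_le h2 (min_le_left _ _)
      have hKb := hK _ (hσmem s ⟨hsb.le, hs.2⟩) _ (hσmem s' ⟨hsb'.le, hs'.2⟩) e1 e2
      have e3 : |s + (a₂ - b₁) - (s' + (a₂ - b₁))| = |s - s'| := by
        have e : s + (a₂ - b₁) - (s' + (a₂ - b₁)) = s - s' := by ring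
        rw [e]
      rwa [e3] at hKb
  · -- causality
    intro s hs t ht hst
    rcases le_or_gt t b₁ with htb | htb
    · rw [hΓ₁ s (hst.le.trans htb), hΓ₁ t htb]
      exact qRel_mk (hcaus₁ s ⟨hs.1, hst.le.trans htb⟩ t ⟨le_trans hs.1 hst.le, htb⟩ hst)
    · rcases le_or_gt s b₁ with hsb | hsb
      · rcases lt_or_eq_of_le hsb with hsb' | rfl
        · rw [hΓ₁ s hsb, hΓ₂ t htb.le]
          refine qRel_mk₂ (hcaus₁ s ⟨hs.1, hsb⟩ b₁ ⟨hab₁, le_rfl⟩ hsb') hj ?_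
          exact hcaus₂ a₂ ⟨le_rfl, hab₂⟩ _ (hσmem t ⟨htb.le, ht.2⟩) (by linarith)
        · rw [hΓ₂ s le_rfl, hΓ₂ t htb.le]
          refine qRel_mk (hcaus₂ _ (hσmem s ⟨le_rfl, hs.2⟩) _ (hσmem t ⟨htb.le, ht.2⟩)
            (by linarith))
      · rw [hΓ₂ s hsb.le, hΓ₂ t htb.le]
        exact qRel_mk (hcaus₂ _ (hσmem s ⟨hsb.le, hs.2⟩) _ (hσmem t ⟨htb.le, ht.2⟩)
          (by linarith))
  · -- right endpoint
    rw [hΓ₂ c hb₁c]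
    have e : c + (a₂ - b₁) = b₂ := by rw [hc]; ring
    rw [e]
  · -- length bound
    have hL₁ : tauLen (sumTau τ₁ τ₂) γ₁ a₁ b₁ ≤
        tauLen (qTau A₁ f τ₁ τ₂ le₁ le₂) Γ a₁ b₁ := by
      refine tauLen_le_tauLen fun u w hu hw huw => ?_
      rw [hΓ₁ u hu.2, hΓ₁ w hw.2]
      exact tau_le_qTau_mk (hcaus₁ u hu w hw huw)
    have hL₂ : tauLen (sumTau τ₁ τ₂) γ₂ a₂ b₂ ≤
        tauLen (qTau A₁ f τ₁ τ₂ le₁ le₂) Γ b₁ c := by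
      conv_rhs => rw [tauLen]
      refine le_sInf ?_
      rintro v ⟨n, t, ht, h0, hl, rfl⟩
      have hmem : ∀ j : Fin (n + 1), t j ∈ Icc b₁ c := fun j =>
        ⟨h0 ▸ ht.monotone (Fin.zero_le j), hl ▸ ht.monotone (Fin.le_last j)⟩
      have hmono' : StrictMono (fun i : Fin (n + 1) => t i + (a₂ - b₁)) := by
        intro i j hij
        have := ht hij
        simpa using this
      have h0' : (fun i : Fin (n + 1) => t i + (a₂ - b₁)) 0 = a₂ := by
        simp only [h0]; ring
      have hl' : (fun i : Fin (n + 1) => t i + (a₂ - b₁)) (Fin.last n) = b₂ := by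
        simp only [hl, hc]; ring
      refine le_trans (tauLen_le_sum hmono' h0' hl') ?_
      refine Finset.sum_le_sum fun i _ => ?_
      have e1 : Γ (t i.castSucc) =
          Quotient.mk (glueSetoid A₁ f) (γ₂ (t i.castSucc + (a₂ - b₁))) :=
        hΓ₂ _ (hmem _).1
      have e2 : Γ (t i.succ) =
          Quotient.mk (glueSetoid A₁ f) (γ₂ (t i.succ + (a₂ - b₁))) :=
        hΓ₂ _ (hmem _).1
      rw [e1, e2]
      refine tau_le_qTau_mk (hcaus₂ _ (hσmem _ (hmem _)) _ (hσmem _ (hmem _)) ?_)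
      have := ht (Fin.castSucc_lt_succ (i := i))
      linarith
    have hrev : ∀ u w, a₁ ≤ u → u < b₁ → b₁ < w → w ≤ c →
        qTau A₁ f τ₁ τ₂ le₁ le₂ (Γ u) (Γ b₁) + qTau A₁ f τ₁ τ₂ le₁ le₂ (Γ b₁) (Γ w) ≤
          qTau A₁ f τ₁ τ₂ le₁ le₂ (Γ u) (Γ w) := by
      intro u w hau hub hbw hwc
      have eu : Γ u = Quotient.mk (glueSetoid A₁ f) (γ₁ u) := hΓ₁ u hub.le
      have eb : Γ b₁ = Quotient.mk (glueSetoid A₁ f) (γ₂ a₂) := by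
        rw [hΓ₂ b₁ le_rfl]
        have e : b₁ + (a₂ - b₁) = a₂ := by ring
        rw [e]
      have ew : Γ w = Quotient.mk (glueSetoid A₁ f) (γ₂ (w + (a₂ - b₁))) := hΓ₂ w hbw.le
      rw [eu, eb, ew]
      refine qTau_add_le ?_ ?_
      · exact ⟨[(γ₁ u, γ₁ b₁)], isCausalChain_singleton (glueEqv_refl _)
          (hcaus₁ u ⟨hau, hub.le⟩ b₁ ⟨hab₁, le_rfl⟩ hub) hj⟩
      · refine ⟨[(γ₂ a₂, γ₂ (w + (a₂ - b₁)))], isCausalChain_singleton (glueEqv_refl _)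
          (hcaus₂ a₂ ⟨le_rfl, hab₂⟩ _ (hσmem w ⟨hbw.le, hwc⟩) (by linarith)) (glueEqv_refl _)⟩
    calc tauLen (sumTau τ₁ τ₂) γ₁ a₁ b₁ + tauLen (sumTau τ₁ τ₂) γ₂ a₂ b₂
        ≤ tauLen (qTau A₁ f τ₁ τ₂ le₁ le₂) Γ a₁ b₁ +
          tauLen (qTau A₁ f τ₁ τ₂ le₁ le₂) Γ b₁ c := add_le_add hL₁ hL₂
      _ ≤ tauLen (qTau A₁ f τ₁ τ₂ le₁ le₂) Γ a₁ c :=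
          tauLen_superadd hab₁ hb₁c hrev

end Concat
/-- If `X₁` and `X₂` are intrinsic Lorentzian pre-length spaces, then their
amalgamation is intrinsic: `τ̃` is the supremum of `τ̃`-lengths of causal curves. -/
theorem amalgamation_intrinsic
    {X₁ X₂ : Type*} [MetricSpace X₁] [MetricSpace X₂]
    (A₁ : Set X₁) (A₂ : Set X₂) (hA₁ : IsClosed A₁) (hA₂ : IsClosed A₂)
    (f : X₁ → X₂) (g : X₂ → X₁) (hf : Set.BijOn f A₁ A₂)
    (hgf : ∀ a ∈ A₁, g (f a) = a) (hfc : ContinuousOn f A₁) (hgc : ContinuousOn g A₂)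
    (hlip : ∀ a ∈ A₁, ∃ ε > (0:ℝ), ∃ K : NNReal, ∀ x ∈ A₁ ∩ Metric.ball a ε,
      ∀ y ∈ A₁ ∩ Metric.ball a ε,
        dist (f x) (f y) ≤ K * dist x y ∧ dist x y ≤ K * dist (f x) (f y))
    (ll₁ le₁ : X₁ → X₁ → Prop) (ll₂ le₂ : X₂ → X₂ → Prop)
    (τ₁ : X₁ → X₁ → ENNReal) (τ₂ : X₂ → X₂ → ENNReal)
    (le₁_refl : ∀ x, le₁ x x) (le₁_trans : ∀ x y z, le₁ x y → le₁ y z → le₁ x z)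
    (le₂_refl : ∀ x, le₂ x x) (le₂_trans : ∀ x y z, le₂ x y → le₂ y z → le₂ x z)
    (ll₁_trans : ∀ x y z, ll₁ x y → ll₁ y z → ll₁ x z)
    (ll₂_trans : ∀ x y z, ll₂ x y → ll₂ y z → ll₂ x z)
    (ll₁_le : ∀ x y, ll₁ x y → le₁ x y) (ll₂_le : ∀ x y, ll₂ x y → le₂ x y)
    (τ₁_lsc : LowerSemicontinuous fun p : X₁ × X₁ => τ₁ p.1 p.2)
    (τ₂_lsc : LowerSemicontinuous fun p : X₂ × X₂ => τ₂ p.1 p.2)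
    (rev_tri₁ : ∀ x y z, le₁ x y → le₁ y z → τ₁ x y + τ₁ y z ≤ τ₁ x z)
    (rev_tri₂ : ∀ x y z, le₂ x y → le₂ y z → τ₂ x y + τ₂ y z ≤ τ₂ x z)
    (ll₁_iff : ∀ x y, ll₁ x y ↔ 0 < τ₁ x y) (ll₂_iff : ∀ x y, ll₂ x y ↔ 0 < τ₂ x y)
    (ntli₁_future : ∀ a ∈ A₁, (∃ q, ll₁ a q) → ∀ U ∈ nhds a, ∃ b ∈ U ∩ A₁, ll₁ a b)
    (ntli₁_past : ∀ a ∈ A₁, (∃ q, ll₁ q a) → ∀ U ∈ nhds a, ∃ b ∈ U ∩ A₁, ll₁ b a)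
    (ntli₂_future : ∀ a ∈ A₂, (∃ q, ll₂ a q) → ∀ U ∈ nhds a, ∃ b ∈ U ∩ A₂, ll₂ a b)
    (ntli₂_past : ∀ a ∈ A₂, (∃ q, ll₂ q a) → ∀ U ∈ nhds a, ∃ b ∈ U ∩ A₂, ll₂ b a)
    (hpres_le : ∀ a ∈ A₁, ∀ b ∈ A₁, (le₁ a b ↔ le₂ (f a) (f b)))
    (hpres_ll : ∀ a ∈ A₁, ∀ b ∈ A₁, (ll₁ a b ↔ ll₂ (f a) (f b)))
    (hpres_tau : ∀ a ∈ A₁, ∀ b ∈ A₁, τ₁ a b = τ₂ (f a) (f b))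
    (hcompat : ∀ a ∈ A₁, ((∃ q, ll₁ a q) ↔ (∃ q, ll₂ (f a) q)) ∧
      ((∃ q, ll₁ q a) ↔ (∃ q, ll₂ q (f a))))
    (intrinsic₁ : ∀ x y, τ₁ x y = sSup {v | ∃ γ a b,
      IsCausalCurveE (fun u w => edist u w) le₁ γ a b ∧ γ a = x ∧ γ b = y ∧
        v = tauLen τ₁ γ a b})
    (intrinsic₂ : ∀ x y, τ₂ x y = sSup {v | ∃ γ a b,
      IsCausalCurveE (fun u w => edist u w) le₂ γ a b ∧ γ a = x ∧ γ b = y ∧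
        v = tauLen τ₂ γ a b})
    :
    ∀ p q : Quotient (glueSetoid A₁ f),
      qTau A₁ f τ₁ τ₂ le₁ le₂ p q = sSup {v | ∃ γ a b,
        IsCausalCurveE (qDist A₁ f) (qRel A₁ f (sumRel le₁ le₂)) γ a b ∧
          γ a = p ∧ γ b = q ∧ v = tauLen (qTau A₁ f τ₁ τ₂ le₁ le₂) γ a b} := by
  have hinj : Set.InjOn f A₁ := hf.injOn
  intro p q
  -- realization lemmas
  have real₁ : ∀ (u v : X₁) (r : ENNReal), r < τ₁ u v → ∃ γ a b,
      IsCausalCurveE (fun x y => edist x y) le₁ γ a b ∧ γ a = u ∧ γ b = v ∧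
        r < tauLen τ₁ γ a b := by
    intro u v r hr
    rw [intrinsic₁] at hr
    obtain ⟨w, hw, hrw⟩ := lt_sSup_iff.mp hr
    obtain ⟨γ, a, b, hcv, ha, hb, rfl⟩ := hw
    exact ⟨γ, a, b, hcv, ha, hb, hrw⟩
  have real₂ : ∀ (u v : X₂) (r : ENNReal), r < τ₂ u v → ∃ γ a b,
      IsCausalCurveE (fun x y => edist x y) le₂ γ a b ∧ γ a = u ∧ γ b = v ∧
        r < tauLen τ₂ γ a b := by
    intro u v r hr
    rw [intrinsic₂] at hr
    obtain ⟨w, hw, hrw⟩ := lt_sSup_iff.mp hr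
    obtain ⟨γ, a, b, hcv, ha, hb, rfl⟩ := hw
    exact ⟨γ, a, b, hcv, ha, hb, hrw⟩
  refine le_antisymm ?_ ?_
  · -- hard direction
    have hmkp : ∀ {u : X₁ ⊕ X₂}, glueEqv A₁ f p.out u →
        Quotient.mk (glueSetoid A₁ f) u = p := fun h =>
      (mk_eq_of_eqv (glueEqv_symm h)).trans (Quotient.out_eq p)
    have hmkq : ∀ {u : X₁ ⊕ X₂}, glueEqv A₁ f u q.out →
        Quotient.mk (glueSetoid A₁ f) u = q := fun h =>
      (mk_eq_of_eqv h).trans (Quotient.out_eq q)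
    rw [qTau, quotTau_le_iff]
    intro l hl
    refine le_of_forall_lt fun r hr => ?_
    -- helpers to produce elements of the sup set
    have step1 : ∀ (δ : ℝ → X₁ ⊕ X₂) (A' B' : ℝ),
        IsCausalCurveE sumEDist (sumRel le₁ le₂) δ A' B' →
        glueEqv A₁ f p.out (δ A') → glueEqv A₁ f (δ B') q.out →
        r < tauLen (sumTau τ₁ τ₂) δ A' B' →
        r < sSup {v | ∃ γ a b,
          IsCausalCurveE (qDist A₁ f) (qRel A₁ f (sumRel le₁ le₂)) γ a b ∧
          γ a = p ∧ γ b = q ∧ v = tauLen (qTau A₁ f τ₁ τ₂ le₁ le₂) γ a b} := by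
      intro δ A' B' hδ hp hq hrlt
      refine lt_of_lt_of_le (lt_of_lt_of_le hrlt (push_tauLen hδ))
        (le_sSup ⟨_, A', B', push_causal hδ, ?_, ?_, rfl⟩)
      · exact hmkp hp
      · exact hmkq hq
    have step2 : ∀ (δ₁ δ₂ : ℝ → X₁ ⊕ X₂) (A1 B1 A2 B2 : ℝ),
        IsCausalCurveE sumEDist (sumRel le₁ le₂) δ₁ A1 B1 →
        IsCausalCurveE sumEDist (sumRel le₁ le₂) δ₂ A2 B2 →
        glueEqv A₁ f (δ₁ B1) (δ₂ A2) →
        glueEqv A₁ f p.out (δ₁ A1) → glueEqv A₁ f (δ₂ B2) q.out →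
        r < tauLen (sumTau τ₁ τ₂) δ₁ A1 B1 + tauLen (sumTau τ₁ τ₂) δ₂ A2 B2 →
        r < sSup {v | ∃ γ a b,
          IsCausalCurveE (qDist A₁ f) (qRel A₁ f (sumRel le₁ le₂)) γ a b ∧
          γ a = p ∧ γ b = q ∧ v = tauLen (qTau A₁ f τ₁ τ₂ le₁ le₂) γ a b} := by
      intro δ₁ δ₂ A1 B1 A2 B2 h1 h2 hj hp hq hrlt
      obtain ⟨Γ, A, C, hΓ, hΓA, hΓC, hΓlen⟩ := concat_curves h1 h2 hj
      refine lt_of_lt_of_le (lt_of_lt_of_le hrlt hΓlen)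
        (le_sSup ⟨Γ, A, C, hΓ, ?_, ?_, rfl⟩)
      · rw [hΓA]; exact hmkp hp
      · rw [hΓC]; exact hmkq hq
    rcases chain_reduce hinj le₁_trans le₂_trans rev_tri₁ rev_tri₂ hpres_le hpres_tau
        l p.out q.out hl with
      ⟨u, v, hxu, hvy, huv, hsum⟩ | ⟨u, cc, cc', v, hxu, hvy, huc, hcr, hcv, hsum⟩
    · -- single pair
      rcases u with ux | ux <;> rcases v with vx | vx
      · have hr' : r < τ₁ ux vx := by
          have := hr.trans_le hsum
          simpa [sumTau] using this
        obtain ⟨γ, a, b, hγ, ha, hb, hlen⟩ := real₁ ux vx r hr'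
        refine step1 (fun t => Sum.inl (γ t)) a b (inl_causal hγ) ?_ ?_ ?_
        · simp only [ha]; exact hxu
        · simp only [hb]; exact hvy
        · rw [tauLen_inl]; exact hlen
      · exact False.elim huv
      · exact False.elim huv
      · have hr' : r < τ₂ ux vx := by
          have := hr.trans_le hsum
          simpa [sumTau] using this
        obtain ⟨γ, a, b, hγ, ha, hb, hlen⟩ := real₂ ux vx r hr'
        refine step1 (fun t => Sum.inr (γ t)) a b (inr_causal hγ) ?_ ?_ ?_
        · simp only [ha]; exact hxu
        · simp only [hb]; exact hvy
        · rw [tauLen_inr]; exact hlen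
    · -- single crossing
      rcases hcr with ⟨a0, ha0, rfl, rfl⟩ | ⟨a0, ha0, rfl, rfl⟩
      · -- crossing X₁ → X₂ : cc = inl a0, cc' = inr (f a0)
        rcases u with ux | ux
        swap
        · exact False.elim huc
        rcases v with vx | vx
        · exact False.elim hcv
        have hle₁' : le₁ ux a0 := huc
        have hle₂' : le₂ (f a0) vx := hcv
        have hr2 : r < τ₁ ux a0 + τ₂ (f a0) vx := by
          have := hr.trans_le hsum
          simpa [sumTau] using this
        by_cases hA : {v | ∃ γ a b, IsCausalCurveE (fun u w => edist u w) le₁ γ a b ∧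
            γ a = ux ∧ γ b = a0 ∧ v = tauLen τ₁ γ a b}.Nonempty
        · by_cases hB : {v | ∃ γ a b, IsCausalCurveE (fun u w => edist u w) le₂ γ a b ∧
              γ a = f a0 ∧ γ b = vx ∧ v = tauLen τ₂ γ a b}.Nonempty
          · rw [intrinsic₁ ux a0, intrinsic₂ (f a0) vx] at hr2
            obtain ⟨vA, hvA, vB, hvB, hrv⟩ := exists_of_lt_sSup_add hA hB hr2
            obtain ⟨γa, aa, ba, hγa, haa, hba, rfl⟩ := hvA
            obtain ⟨γb, ab, bb, hγb, hab', hbb, rfl⟩ := hvB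
            refine step2 (fun t => Sum.inl (γa t)) (fun t => Sum.inr (γb t)) aa ba ab bb
              (inl_causal hγa) (inr_causal hγb) ?_ ?_ ?_ ?_
            · simp only [hba, hab']; exact glueEqv_of_mem ha0
            · simp only [haa]; exact hxu
            · simp only [hbb]; exact hvy
            · rw [tauLen_inl, tauLen_inr]; exact hrv
          · -- right leg dead : τ₂ (f a0) vx = 0
            have hz : τ₂ (f a0) vx = 0 := by
              rw [intrinsic₂ (f a0) vx, Set.not_nonempty_iff_eq_empty.mp hB]
              simp
            have hr3 : r < τ₁ ux a0 := by
              rw [hz, add_zero] at hr2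
              exact hr2
            have hll : ll₁ ux a0 := (ll₁_iff _ _).mpr (lt_of_le_of_lt zero_le hr3)
            obtain ⟨r', hrr', hr'τ⟩ := exists_between hr3
            obtain ⟨V, hV, hVr⟩ := lsc_nbhd_snd τ₁_lsc hr'τ
            obtain ⟨b, ⟨hbV, hbA⟩, hllb⟩ := ntli₁_past a0 ha0 ⟨ux, hll⟩ V hV
            have hll2 : ll₂ (f b) (f a0) := (hpres_ll b hbA a0 ha0).mp hllb
            have hτ1 : r' < τ₁ ux b := hVr b hbV
            obtain ⟨γa, aa, ba, hγa, haa, hba, hlena⟩ := real₁ ux b r' hτ1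
            have hle2 : le₂ (f b) vx := le₂_trans _ _ _ (ll₂_le _ _ hll2) hle₂'
            have hτ2 : 0 < τ₂ (f b) vx :=
              lt_of_lt_of_le ((ll₂_iff _ _).mp hll2)
                (le_trans le_self_add (rev_tri₂ _ _ _ (ll₂_le _ _ hll2) hle₂'))
            obtain ⟨γb, ab, bb, hγb, hab', hbb, _⟩ := real₂ (f b) vx 0 hτ2
            refine step2 (fun t => Sum.inl (γa t)) (fun t => Sum.inr (γb t)) aa ba ab bb
              (inl_causal hγa) (inr_causal hγb) ?_ ?_ ?_ ?_
            · simp only [hba, hab']; exact glueEqv_of_mem hbA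
            · simp only [haa]; exact hxu
            · simp only [hbb]; exact hvy
            · rw [tauLen_inl, tauLen_inr]
              exact lt_of_lt_of_le (lt_trans hrr' hlena) le_self_add
        · -- left leg dead : τ₁ ux a0 = 0
          have hz : τ₁ ux a0 = 0 := by
            rw [intrinsic₁ ux a0, Set.not_nonempty_iff_eq_empty.mp hA]
            simp
          have hr3 : r < τ₂ (f a0) vx := by
            rw [hz, zero_add] at hr2
            exact hr2
          have hll : ll₂ (f a0) vx := (ll₂_iff _ _).mpr (lt_of_le_of_lt zero_le hr3)
          obtain ⟨r', hrr', hr'τ⟩ := exists_between hr3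
          obtain ⟨V, hV, hVr⟩ := lsc_nbhd_fst τ₂_lsc hr'τ
          have hfa0 : f a0 ∈ A₂ := hf.mapsTo ha0
          obtain ⟨b', ⟨hb'V, hb'A⟩, hllb⟩ := ntli₂_future (f a0) hfa0 ⟨vx, hll⟩ V hV
          obtain ⟨w, hwA, hwf⟩ := hf.surjOn hb'A
          rw [← hwf] at hllb hb'V
          have hll1 : ll₁ a0 w := (hpres_ll a0 ha0 w hwA).mpr hllb
          have hle1 : le₁ ux w := le₁_trans _ _ _ hle₁' (ll₁_le _ _ hll1)
          have hτ1 : 0 < τ₁ ux w :=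
            lt_of_lt_of_le ((ll₁_iff _ _).mp hll1)
              (le_trans le_add_self (rev_tri₁ _ _ _ hle₁' (ll₁_le _ _ hll1)))
          obtain ⟨γa, aa, ba, hγa, haa, hba, _⟩ := real₁ ux w 0 hτ1
          have hτ2 : r' < τ₂ (f w) vx := hVr (f w) hb'V
          obtain ⟨γb, ab, bb, hγb, hab', hbb, hlenb⟩ := real₂ (f w) vx r' hτ2
          refine step2 (fun t => Sum.inl (γa t)) (fun t => Sum.inr (γb t)) aa ba ab bb
            (inl_causal hγa) (inr_causal hγb) ?_ ?_ ?_ ?_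
          · simp only [hba, hab']; exact glueEqv_of_mem hwA
          · simp only [haa]; exact hxu
          · simp only [hbb]; exact hvy
          · rw [tauLen_inl, tauLen_inr]
            exact lt_of_lt_of_le (lt_trans hrr' hlenb) le_add_self
      · -- crossing X₂ → X₁ : cc' = inl a0, cc = inr (f a0)
        rcases u with ux | ux
        · exact False.elim huc
        rcases v with vx | vx
        swap
        · exact False.elim hcv
        have hle₂' : le₂ ux (f a0) := huc
        have hle₁' : le₁ a0 vx := hcv
        have hr2 : r < τ₂ ux (f a0) + τ₁ a0 vx := by
          have := hr.trans_le hsum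
          simpa [sumTau] using this
        by_cases hA : {v | ∃ γ a b, IsCausalCurveE (fun u w => edist u w) le₂ γ a b ∧
            γ a = ux ∧ γ b = f a0 ∧ v = tauLen τ₂ γ a b}.Nonempty
        · by_cases hB : {v | ∃ γ a b, IsCausalCurveE (fun u w => edist u w) le₁ γ a b ∧
              γ a = a0 ∧ γ b = vx ∧ v = tauLen τ₁ γ a b}.Nonempty
          · rw [intrinsic₂ ux (f a0), intrinsic₁ a0 vx] at hr2
            obtain ⟨vA, hvA, vB, hvB, hrv⟩ := exists_of_lt_sSup_add hA hB hr2
            obtain ⟨γa, aa, ba, hγa, haa, hba, rfl⟩ := hvA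
            obtain ⟨γb, ab, bb, hγb, hab', hbb, rfl⟩ := hvB
            refine step2 (fun t => Sum.inr (γa t)) (fun t => Sum.inl (γb t)) aa ba ab bb
              (inr_causal hγa) (inl_causal hγb) ?_ ?_ ?_ ?_
            · simp only [hba, hab']; exact glueEqv_symm (glueEqv_of_mem ha0)
            · simp only [haa]; exact hxu
            · simp only [hbb]; exact hvy
            · rw [tauLen_inl, tauLen_inr]; exact hrv
          · -- right leg dead : τ₁ a0 vx = 0
            have hz : τ₁ a0 vx = 0 := by
              rw [intrinsic₁ a0 vx, Set.not_nonempty_iff_eq_empty.mp hB]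
              simp
            have hr3 : r < τ₂ ux (f a0) := by
              rw [hz, add_zero] at hr2
              exact hr2
            have hll : ll₂ ux (f a0) := (ll₂_iff _ _).mpr (lt_of_le_of_lt zero_le hr3)
            obtain ⟨r', hrr', hr'τ⟩ := exists_between hr3
            obtain ⟨V, hV, hVr⟩ := lsc_nbhd_snd τ₂_lsc hr'τ
            have hfa0 : f a0 ∈ A₂ := hf.mapsTo ha0
            obtain ⟨b', ⟨hb'V, hb'A⟩, hllb⟩ := ntli₂_past (f a0) hfa0 ⟨ux, hll⟩ V hV
            obtain ⟨w, hwA, hwf⟩ := hf.surjOn hb'A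
            rw [← hwf] at hllb hb'V
            have hll1 : ll₁ w a0 := (hpres_ll w hwA a0 ha0).mpr hllb
            have hτ1 : r' < τ₂ ux (f w) := hVr (f w) hb'V
            obtain ⟨γa, aa, ba, hγa, haa, hba, hlena⟩ := real₂ ux (f w) r' hτ1
            have hle2 : le₁ w vx := le₁_trans _ _ _ (ll₁_le _ _ hll1) hle₁'
            have hτ2 : 0 < τ₁ w vx :=
              lt_of_lt_of_le ((ll₁_iff _ _).mp hll1)
                (le_trans le_self_add (rev_tri₁ _ _ _ (ll₁_le _ _ hll1) hle₁'))
            obtain ⟨γb, ab, bb, hγb, hab', hbb, _⟩ := real₁ w vx 0 hτ2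
            refine step2 (fun t => Sum.inr (γa t)) (fun t => Sum.inl (γb t)) aa ba ab bb
              (inr_causal hγa) (inl_causal hγb) ?_ ?_ ?_ ?_
            · simp only [hba, hab']; exact glueEqv_symm (glueEqv_of_mem hwA)
            · simp only [haa]; exact hxu
            · simp only [hbb]; exact hvy
            · rw [tauLen_inl, tauLen_inr]
              exact lt_of_lt_of_le (lt_trans hrr' hlena) le_self_add
        · -- left leg dead : τ₂ ux (f a0) = 0
          have hz : τ₂ ux (f a0) = 0 := by
            rw [intrinsic₂ ux (f a0), Set.not_nonempty_iff_eq_empty.mp hA]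
            simp
          have hr3 : r < τ₁ a0 vx := by
            rw [hz, zero_add] at hr2
            exact hr2
          have hll : ll₁ a0 vx := (ll₁_iff _ _).mpr (lt_of_le_of_lt zero_le hr3)
          obtain ⟨r', hrr', hr'τ⟩ := exists_between hr3
          obtain ⟨V, hV, hVr⟩ := lsc_nbhd_fst τ₁_lsc hr'τ
          obtain ⟨b, ⟨hbV, hbA⟩, hllb⟩ := ntli₁_future a0 ha0 ⟨vx, hll⟩ V hV
          have hll2 : ll₂ (f a0) (f b) := (hpres_ll a0 ha0 b hbA).mp hllb
          have hτ1 : 0 < τ₂ ux (f b) :=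
            lt_of_lt_of_le ((ll₂_iff _ _).mp hll2)
              (le_trans le_add_self (rev_tri₂ _ _ _ hle₂' (ll₂_le _ _ hll2)))
          obtain ⟨γa, aa, ba, hγa, haa, hba, _⟩ := real₂ ux (f b) 0 hτ1
          have hτ2 : r' < τ₁ b vx := hVr b hbV
          obtain ⟨γb, ab, bb, hγb, hab', hbb, hlenb⟩ := real₁ b vx r' hτ2
          refine step2 (fun t => Sum.inr (γa t)) (fun t => Sum.inl (γb t)) aa ba ab bb
            (inr_causal hγa) (inl_causal hγb) ?_ ?_ ?_ ?_
          · simp only [hba, hab']; exact glueEqv_symm (glueEqv_of_mem hbA)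
          · simp only [haa]; exact hxu
          · simp only [hbb]; exact hvy
          · rw [tauLen_inl, tauLen_inr]
            exact lt_of_lt_of_le (lt_trans hrr' hlenb) le_add_self
  · -- easy direction
    refine sSup_le ?_
    rintro v ⟨γ, a, b, hγ, ha, hb, rfl⟩
    have h := tauLen_le_pair (T := qTau A₁ f τ₁ τ₂ le₁ le₂) (γ := γ) hγ.1
    rw [ha, hb] at h
    exact h
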